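/- For a two-action agent that spikes rarely, mutual information is the spike probability times the effective information of a spike, up to second order: with the policy family π_p as in the context, the mutual information I_{π_p} := ∑_{s} ∑_{a ∈ {a0,a1} : π_p(a|s) > 0} P_S(s)·π_p(a|s)·log(π_p(a|s)/π_p(a)) satisfies lim_{p → 0⁺} (I_{π_p} − p·D[q‖P_S]) / p² = (1/2)·∑_s (P_S(s) − q(s))²/P_S(s), where D[q‖P_S] := ∑_{s : q(s) > 0} q(s)·log(q(s)/P_S(s)); in particular I_{π_p} = p·ei(π_p, a1) + O(p²) as p → 0⁺, since the posterior π_p(s|a1) equals q(s) and hence ei(π_p, a1) = D[q‖P_S]. -/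

import Mathlib

open scoped Classical
open Asymptotics Filter

noncomputable def gfun (x : ℝ) : ℝ := (1 - x) * Real.log (1 - x) + x

lemma gfun_tendsto :
    Tendsto (fun x : ℝ => gfun x / x ^ 2)
      (nhdsWithin 0 (Set.Ioi 0)) (nhds (1/2)) := by
  have hd : Tendsto (fun x : ℝ => (-Real.log (1 - x)) / (2 * x))
      (nhdsWithin 0 (Set.Ioi 0)) (nhds (1/2)) := by
    have hder : HasDerivAt (fun x : ℝ => Real.log (1 - x)) (-1) 0 := by
      have h1 : HasDerivAt (fun x : ℝ => 1 - x) (-1) 0 :=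
        (hasDerivAt_const (0:ℝ) (1:ℝ)).sub (hasDerivAt_id 0) |>.congr_deriv (by ring)
      have h2 := (Real.hasDerivAt_log (by norm_num : (1:ℝ) - 0 ≠ 0)).comp 0 h1
      exact h2.congr_deriv (by norm_num)
    have hslope := hasDerivAt_iff_tendsto_slope.mp hder
    have hslope' : Tendsto (fun x : ℝ => Real.log (1 - x) / x)
        (nhdsWithin 0 (Set.Ioi 0)) (nhds (-1)) := by
      have := hslope.mono_left (nhdsWithin_mono 0 (by
        intro x hx
        exact Set.mem_compl_singleton_iff.mpr (ne_of_gt hx)))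
      refine this.congr (fun x => ?_)
      simp [slope_def_field]
    have := hslope'.const_mul (-(1/2) : ℝ)
    norm_num at this
    refine this.congr (fun x => ?_)
    simp only [div_eq_mul_inv, mul_inv]
    ring
  refine HasDerivAt.lhopital_zero_nhdsGT ?_ ?_ ?_ ?_ ?_ hd
  · filter_upwards [Ioo_mem_nhdsGT_of_mem (by norm_num : (0:ℝ) ∈ Set.Ico 0 1)] with x hx
    have hx1 : (1:ℝ) - x ≠ 0 := by nlinarith [hx.2]
    have h1 : HasDerivAt (fun y : ℝ => 1 - y) (-1) x :=
      (hasDerivAt_const (x:ℝ) (1:ℝ)).sub (hasDerivAt_id x) |>.congr_deriv (by ring)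
    have hlog : HasDerivAt (fun y : ℝ => Real.log (1 - y)) ((1-x)⁻¹ * (-1)) x :=
      (Real.hasDerivAt_log hx1).comp x h1
    have hmul := h1.mul hlog
    have hfin := hmul.add (hasDerivAt_id x)
    unfold gfun
    exact hfin.congr_deriv (by rw [mul_inv_cancel_left₀ hx1]; ring)
  · filter_upwards with x
    simpa using (hasDerivAt_pow 2 x)
  · filter_upwards [self_mem_nhdsWithin] with x hx
    have : (0:ℝ) < x := hx
    positivity
  · have hc : ContinuousAt (fun x : ℝ => (1 - x) * Real.log (1 - x) + x) 0 := by
      have : ContinuousAt (fun x : ℝ => Real.log (1 - x)) 0 :=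
        (Real.continuousAt_log (by norm_num)).comp (by fun_prop)
      fun_prop
    have := hc.tendsto.mono_left (nhdsWithin_le_nhds (s := Set.Ioi (0:ℝ)))
    unfold gfun
    simpa using this
  · have : Tendsto (fun x : ℝ => x ^ 2) (nhds 0) (nhds 0) := by
      simpa using (continuous_pow 2).tendsto (0:ℝ)
    exact this.mono_left nhdsWithin_le_nhds

theorem mutual_information_of_rare_spikes
    {S : Type*} [Fintype S] [Nonempty S]
    (P_S : S → ℝ) (hPSpos : ∀ s, 0 < P_S s) (hPSsum : ∑ s, P_S s = 1)
    (q : S → ℝ) (hqnn : ∀ s, 0 ≤ q s) (hqsum : ∑ s, q s = 1)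
    (pol : ℝ → Bool → S → ℝ)
    (hpol1 : ∀ p s, pol p true s = p * q s / P_S s)
    (hpol0 : ∀ p s, pol p false s = 1 - p * q s / P_S s)
    (marg : ℝ → Bool → ℝ) (hmarg : ∀ p a, marg p a = ∑ s, pol p a s * P_S s)
    (I : ℝ → ℝ)
    (hI : ∀ p, I p = ∑ s, ∑ a ∈ Finset.univ.filter (fun a : Bool => 0 < pol p a s),
        P_S s * pol p a s * Real.log (pol p a s / marg p a))
    (D : ℝ)
    (hD : D = ∑ s ∈ Finset.univ.filter (fun s => 0 < q s),
        q s * Real.log (q s / P_S s)) :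
    Tendsto (fun p => (I p - p * D) / p ^ 2) (nhdsWithin 0 (Set.Ioi 0))
        (nhds ((1 / 2) * ∑ s, (P_S s - q s) ^ 2 / P_S s))
      ∧ (fun p => I p - p * D) =O[nhdsWithin (0 : ℝ) (Set.Ioi 0)] fun p => p ^ 2 := by
  have hPne : ∀ s, P_S s ≠ 0 := fun s => (hPSpos s).ne'
  -- marginals
  have hmargT : ∀ p : ℝ, marg p true = p := by
    intro p
    rw [hmarg]
    have h : ∀ s ∈ Finset.univ, pol p true s * P_S s = p * q s := by
      intro s _; rw [hpol1, div_mul_cancel₀ _ (hPne s)]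
    rw [Finset.sum_congr rfl h, ← Finset.mul_sum, hqsum, mul_one]
  have hmargF : ∀ p : ℝ, marg p false = 1 - p := by
    intro p
    rw [hmarg]
    have h : ∀ s ∈ Finset.univ, pol p false s * P_S s = P_S s - p * q s := by
      intro s _; rw [hpol0, sub_mul, one_mul, div_mul_cancel₀ _ (hPne s)]
    rw [Finset.sum_congr rfl h, Finset.sum_sub_distrib, hPSsum, ← Finset.mul_sum, hqsum, mul_one]
  -- eventually p * q s / P_S s < 1
  have hsmall : ∀ᶠ p in nhdsWithin (0:ℝ) (Set.Ioi 0), ∀ s, p * q s / P_S s < 1 := by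
    rw [eventually_all]
    intro s
    have hc : Tendsto (fun p : ℝ => p * q s / P_S s) (nhds 0) (nhds 0) := by
      have hcont : Continuous fun p : ℝ => p * q s / P_S s := by fun_prop
      simpa using hcont.tendsto 0
    have := hc.mono_left (nhdsWithin_le_nhds (s := Set.Ioi (0:ℝ)))
    exact this.eventually_lt_const (by norm_num)
  have hlt1 : ∀ᶠ p in nhdsWithin (0:ℝ) (Set.Ioi 0), p < 1 := by
    have : Tendsto (fun p : ℝ => p) (nhdsWithin 0 (Set.Ioi 0)) (nhds 0) :=
      tendsto_id.mono_left nhdsWithin_le_nhds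
    exact this.eventually_lt_const (by norm_num)
  -- eventual identity
  have hEq : ∀ᶠ p in nhdsWithin (0:ℝ) (Set.Ioi 0),
      I p - p * D = (∑ s, P_S s * gfun (p * q s / P_S s)) - gfun p := by
    filter_upwards [self_mem_nhdsWithin, hsmall, hlt1] with p hp hps hp1
    have hp0 : (0:ℝ) < p := hp
    have h1p : (0:ℝ) < 1 - p := by linarith
    have hinner : ∀ s, (∑ a ∈ Finset.univ.filter (fun a : Bool => 0 < pol p a s),
          P_S s * pol p a s * Real.log (pol p a s / marg p a))
        = (if 0 < q s then p * (q s * Real.log (q s / P_S s)) else 0)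
          + (P_S s * gfun (p * q s / P_S s) - p * q s
              - (P_S s - p * q s) * Real.log (1 - p)) := by
      intro s
      have hPs := hPSpos s
      have h1c : 0 < 1 - p * q s / P_S s := by linarith [hps s]
      rw [Finset.sum_filter, Fintype.sum_bool]
      have htrue : (if 0 < pol p true s then
            P_S s * pol p true s * Real.log (pol p true s / marg p true) else 0)
          = (if 0 < q s then p * (q s * Real.log (q s / P_S s)) else 0) := by
        rw [hpol1, hmargT]
        by_cases hq : 0 < q s
        · have hcpos : 0 < p * q s / P_S s := by positivity
          rw [if_pos hcpos, if_pos hq]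
          have e1 : P_S s * (p * q s / P_S s) = p * q s := by
            rw [mul_comm, div_mul_cancel₀ _ (hPne s)]
          have e2 : p * q s / P_S s / p = q s / P_S s := by
            rw [div_right_comm, mul_comm p (q s), mul_div_assoc, div_self hp0.ne', mul_one]
          rw [e1, e2]
          ring
        · have hq0 : q s = 0 := le_antisymm (not_lt.mp hq) (hqnn s)
          simp [hq0, hq]
      have hfalse : (if 0 < pol p false s then
            P_S s * pol p false s * Real.log (pol p false s / marg p false) else 0)
          = P_S s * gfun (p * q s / P_S s) - p * q s
              - (P_S s - p * q s) * Real.log (1 - p) := by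
        rw [hpol0, hmargF, if_pos (by simpa [hpol0] using h1c)]
        rw [Real.log_div (ne_of_gt h1c) (ne_of_gt h1p)]
        unfold gfun
        field_simp
        ring
      rw [htrue, hfalse]
    rw [hI, hD]
    rw [Finset.sum_congr rfl (fun s _ => hinner s), Finset.sum_add_distrib]
    have hDsum : (∑ s, if 0 < q s then p * (q s * Real.log (q s / P_S s)) else 0)
        = p * (∑ s ∈ Finset.univ.filter (fun s => 0 < q s),
            q s * Real.log (q s / P_S s)) := by
      rw [Finset.mul_sum, Finset.sum_filter]
    have hsum2 : (∑ s, (P_S s * gfun (p * q s / P_S s) - p * q s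
          - (P_S s - p * q s) * Real.log (1 - p)))
        = (∑ s, P_S s * gfun (p * q s / P_S s)) - p - (1 - p) * Real.log (1 - p) := by
      rw [Finset.sum_sub_distrib, Finset.sum_sub_distrib, ← Finset.mul_sum, hqsum, mul_one]
      have h3 : (∑ s, (P_S s - p * q s) * Real.log (1 - p))
          = (1 - p) * Real.log (1 - p) := by
        rw [← Finset.sum_mul, Finset.sum_sub_distrib, hPSsum, ← Finset.mul_sum, hqsum, mul_one]
      rw [h3]
    rw [hDsum, hsum2]
    unfold gfun
    ring
  -- the limit of the model function
  have hterm : ∀ s : S, Tendsto (fun p : ℝ => P_S s * gfun (p * q s / P_S s) / p ^ 2)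
      (nhdsWithin 0 (Set.Ioi 0)) (nhds (q s ^ 2 / P_S s * (1/2))) := by
    intro s
    rcases eq_or_lt_of_le (hqnn s) with hq0 | hqpos
    · have hf : (fun p : ℝ => P_S s * gfun (p * q s / P_S s) / p ^ 2) = fun _ => 0 := by
        funext p
        rw [← hq0]
        simp [gfun]
      rw [hf, ← hq0]
      simp only [ne_eq, OfNat.ofNat_ne_zero, not_false_eq_true, zero_pow, zero_div, zero_mul]
      exact tendsto_const_nhds
    · set c : ℝ := q s / P_S s with hc
      have hcpos : 0 < c := div_pos hqpos (hPSpos s)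
      have hcomp : Tendsto (fun p : ℝ => c * p)
          (nhdsWithin 0 (Set.Ioi 0)) (nhdsWithin 0 (Set.Ioi 0)) := by
        apply tendsto_nhdsWithin_of_tendsto_nhds_of_eventually_within
        · have h : Tendsto (fun p : ℝ => c * p) (nhds 0) (nhds (c * 0)) :=
            (continuous_const.mul continuous_id).tendsto 0
          have h' := h.mono_left (nhdsWithin_le_nhds (s := Set.Ioi (0:ℝ)))
          simpa using h'
        · filter_upwards [self_mem_nhdsWithin] with p hp
          exact Set.mem_Ioi.mpr (mul_pos hcpos hp)
      have h1 := gfun_tendsto.comp hcomp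
      have h2 := h1.const_mul (P_S s * c ^ 2)
      have hq' : q s = c * P_S s := by rw [hc, div_mul_cancel₀ _ (hPne s)]
      have hval : (P_S s * c ^ 2) * (1/2) = q s ^ 2 / P_S s * (1/2) := by
        have h : P_S s * c ^ 2 = q s ^ 2 / P_S s := by
          rw [eq_div_iff (hPne s), hq']; ring
        rw [h]
      rw [hval] at h2
      refine h2.congr' ?_
      filter_upwards [self_mem_nhdsWithin] with p hp
      have hp0 : (0:ℝ) < p := hp
      show (P_S s * c ^ 2) * (gfun (c * p) / (c * p) ^ 2)
          = P_S s * gfun (p * q s / P_S s) / p ^ 2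
      rw [show p * q s / P_S s = c * p by rw [hc]; ring]
      field_simp
  have hsumT := tendsto_finset_sum (Finset.univ (α := S))
      (fun s _ => hterm s)
  have htot := hsumT.sub gfun_tendsto
  have hfeq : (fun p : ℝ => ((∑ s, P_S s * gfun (p * q s / P_S s)) - gfun p) / p ^ 2)
      = fun p : ℝ => (∑ s, P_S s * gfun (p * q s / P_S s) / p ^ 2) - gfun p / p ^ 2 := by
    funext p
    rw [sub_div, Finset.sum_div]
  have hvaltot : (∑ s, q s ^ 2 / P_S s * (1/2)) - 1/2
      = (1 / 2) * ∑ s, (P_S s - q s) ^ 2 / P_S s := by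
    have h : ∀ s ∈ Finset.univ, (P_S s - q s) ^ 2 / P_S s
        = P_S s - 2 * q s + q s ^ 2 / P_S s := by
      intro s _
      have hs := hPne s
      field_simp
      ring
    rw [Finset.sum_congr rfl h, Finset.sum_add_distrib, Finset.sum_sub_distrib, hPSsum,
      ← Finset.mul_sum, hqsum, mul_one, ← Finset.sum_mul]
    ring
  have hmodel : Tendsto (fun p : ℝ => ((∑ s, P_S s * gfun (p * q s / P_S s)) - gfun p) / p ^ 2)
      (nhdsWithin 0 (Set.Ioi 0)) (nhds ((1 / 2) * ∑ s, (P_S s - q s) ^ 2 / P_S s)) := by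
    rw [hfeq, ← hvaltot]
    exact htot
  have hT : Tendsto (fun p => (I p - p * D) / p ^ 2) (nhdsWithin 0 (Set.Ioi 0))
      (nhds ((1 / 2) * ∑ s, (P_S s - q s) ^ 2 / P_S s)) := by
    refine hmodel.congr' ?_
    filter_upwards [hEq] with p hp
    rw [hp]
  refine ⟨hT, ?_⟩
  have h1 : (fun p => (I p - p * D) / p ^ 2)
      =O[nhdsWithin (0:ℝ) (Set.Ioi 0)] (fun _ => (1:ℝ)) := hT.isBigO_one ℝ
  have h2 := h1.mul (isBigO_refl (fun p : ℝ => p ^ 2) (nhdsWithin (0:ℝ) (Set.Ioi 0)))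
  refine h2.congr' ?_ ?_
  · filter_upwards [self_mem_nhdsWithin] with p hp
    have hp0 : (0:ℝ) < p := hp
    have hne : p ^ 2 ≠ 0 := by positivity
    field_simp
  · filter_upwards with p
    simp
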